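/- arXiv:1209.2570 — 4 statements merged into one kernel-verified Lean document; each statement's English description precedes it below -/
import Mathlib

section
/- There exist C₁ > 0, R₁ ∈ (0,2) and n₀ ∈ ℕ such that, whenever α > 0 is sufficiently small, for all (θ,x) ∈ I: |∂f_k(θ,x)/∂x| ≤ C₁·R₁^k for every k ∈ ℕ, and |∂f_k(θ,x)/∂x| ≤ R₁^k ≤ d^k/6 for every k ≥ n₀. -/
open Set MeasureTheory Filter
open scoped ENNReal

noncomputable section

/-- The quadratic map `f(x) = a - x²`. -/
def qm (a : ℝ) : ℝ → ℝ := fun x => a - x ^ 2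

/-- The critical point `0` of `qm a` is strictly pre-periodic: its forward orbit never
returns to `0` and is eventually periodic. -/
def StrictlyPreperiodic (a : ℝ) : Prop :=
  (∀ i : ℕ, 1 ≤ i → (qm a)^[i] 0 ≠ 0) ∧
    ∃ m p : ℕ, 1 ≤ m ∧ 1 ≤ p ∧ (qm a)^[m + p] 0 = (qm a)^[m] 0

/-- A lift of the Viana skew product `F(θ, x) = (dθ, f(x) + αφ(θ))` to `ℝ × ℝ`;
for `φ` of period `1` this is a lift of the corresponding map of `(ℝ/ℤ) × ℝ`. -/
def Viana (a : ℝ) (d : ℕ) (φ : ℝ → ℝ) (α : ℝ) : ℝ × ℝ → ℝ × ℝ :=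
  fun p => ((d : ℝ) * p.1, qm a p.2 + α * φ p.1)

/-- The fibre maps `f_n`, defined by `F^n(θ, x) = (d^n θ, f_n(θ, x))`. -/
def fn (a : ℝ) (d : ℕ) (φ : ℝ → ℝ) (α : ℝ) (n : ℕ) (θ x : ℝ) : ℝ :=
  ((Viana a d φ α)^[n] (θ, x)).2

lemma viana_fst (a : ℝ) (d : ℕ) (φ : ℝ → ℝ) (α : ℝ) (n : ℕ) (p : ℝ × ℝ) :
    ((Viana a d φ α)^[n] p).1 = (d : ℝ) ^ n * p.1 := by
  induction n with
  | zero => simp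
  | succ n ih =>
    rw [Function.iterate_succ_apply']
    show (d : ℝ) * ((Viana a d φ α)^[n] p).1 = _
    rw [ih, pow_succ]; ring

lemma fn_zero (a : ℝ) (d : ℕ) (φ : ℝ → ℝ) (α : ℝ) (θ x : ℝ) :
    fn a d φ α 0 θ x = x := rfl

lemma fn_succ (a : ℝ) (d : ℕ) (φ : ℝ → ℝ) (α : ℝ) (n : ℕ) (θ x : ℝ) :
    fn a d φ α (n + 1) θ x = qm a (fn a d φ α n θ x) + α * φ ((d : ℝ) ^ n * θ) := by
  unfold fn
  rw [Function.iterate_succ_apply']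
  show qm a (((Viana a d φ α)^[n] (θ, x)).2) + α * φ (((Viana a d φ α)^[n] (θ, x)).1) = _
  rw [viana_fst]

set_option maxHeartbeats 1000000 in
/-- domination. There are `C₁ > 0`, `R₁ ∈ (0,2)` and `n₀ ∈ ℕ` such that for
`α > 0` small enough and all `(θ,x) ∈ I = 𝕋 × [-β,β]`: `|∂f_k/∂x| ≤ C₁ R₁^k` for all `k`, and
`|∂f_k/∂x| ≤ R₁^k ≤ d^k/6` for `k ≥ n₀`. -/
theorem domination_lemma
    (a : ℝ) (ha : a ∈ Set.Ioo (1 : ℝ) 2) (hpre : StrictlyPreperiodic a)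
    (d : ℕ) (hd : 2 ≤ d)
    (φ : ℝ → ℝ) (hφa : ∀ x : ℝ, AnalyticAt ℝ φ x) (hφp : Function.Periodic φ 1)
    (hφnc : ∃ s t : ℝ, φ s ≠ φ t) (hφb : ∀ θ : ℝ, |φ θ| ≤ 1)
    (β : ℝ) (hβ1 : 1 < β) (hβ2 : β < |(-1 - Real.sqrt (1 + 4 * a)) / 2|)
    (hβmap : ∀ x ∈ Set.Icc (-β) β, qm a x ∈ Set.Ioo (-β) β)
    (hβder : ∀ x : ℝ, β ≤ |x| → 2 * β ≤ |deriv (qm a) x|)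
    :
    ∃ C₁ : ℝ, 0 < C₁ ∧ ∃ R₁ : ℝ, R₁ ∈ Set.Ioo (0 : ℝ) 2 ∧ ∃ n₀ : ℕ,
      ∃ α₀ > 0, ∀ α : ℝ, 0 < α → α < α₀ →
        ∀ θ x : ℝ, x ∈ Set.Icc (-β) β →
          (∀ k : ℕ, |deriv (fun y => fn a d φ α k θ y) x| ≤ C₁ * R₁ ^ k) ∧
          (∀ k : ℕ, n₀ ≤ k →
            |deriv (fun y => fn a d φ α k θ y) x| ≤ R₁ ^ k ∧ R₁ ^ k ≤ (d : ℝ) ^ k / 6) := by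
  obtain ⟨ha1, ha2⟩ := ha
  -- basic constants
  set s := Real.sqrt (1 + 4 * a) with hs_def
  have hs0 : 0 ≤ s := Real.sqrt_nonneg _
  have hs2 : s ^ 2 = 1 + 4 * a := Real.sq_sqrt (by linarith)
  set P : ℝ := (1 + s) / 2 with hP_def
  have hβP : β < P := by
    have habs : |(-1 - s) / 2| = P := by
      rw [abs_of_neg (by linarith : (-1 - s) / 2 < 0)]; rw [hP_def]; ring
    rw [habs] at hβ2; exact hβ2
  have hPa : a < P := by nlinarith [hs2, hs0]
  have hP2 : P ^ 2 = a + P := by rw [hP_def]; linear_combination (1/4 : ℝ) * hs2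
  have hβ0 : 0 < β := by linarith
  have haβ : a < β := by
    have h0 : (0 : ℝ) ∈ Icc (-β) β := ⟨by linarith, by linarith⟩
    have := (hβmap 0 h0).2
    simpa [qm] using this
  have hββ : β ^ 2 - β < a := by
    linarith [mul_pos (sub_pos.mpr hβP) (show (0:ℝ) < P + β - 1 by linarith), hP2]
  have hβsq1 : 1 < β ^ 2 := by nlinarith
  have hfeas : β ^ 4 - (1 + 2 * a) * β ^ 2 + a ^ 2 < 0 := by
    have h1 : 0 < a + P - β ^ 2 := by nlinarith [hβP, hP2, hβ0]
    have h2 : 0 < β ^ 2 - 1 - a + P := by nlinarith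
    linarith [mul_pos h1 h2, hP2]
  have hden : (0 : ℝ) < 2 * (β ^ 2 - 1) := by linarith
  set bsq := (β ^ 2 * (β ^ 2 - 1) + (2 * a * β ^ 2 - a ^ 2)) / (2 * (β ^ 2 - 1)) with hbsq_def
  have hkey1 : β ^ 2 * (β ^ 2 - 1) < 2 * a * β ^ 2 - a ^ 2 := by linarith [hfeas]
  have hbsqβ : β ^ 2 < bsq := by
    rw [hbsq_def, lt_div_iff₀ hden]; linarith [hkey1]
  have hbsqhalf : bsq * (β ^ 2 - 1) = (β ^ 2 * (β ^ 2 - 1) + (2 * a * β ^ 2 - a ^ 2)) / 2 := by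
    rw [hbsq_def, div_mul_eq_mul_div, div_eq_div_iff hden.ne' two_ne_zero]; ring
  have hΦβ : bsq * (β ^ 2 - 1) + a ^ 2 - 2 * a * β ^ 2 < 0 := by
    rw [hbsqhalf]; linarith [hkey1]
  have ha2β : a ^ 2 < β ^ 2 := by nlinarith [haβ, ha1]
  have hbsqa : a ^ 2 < bsq := lt_trans ha2β hbsqβ
  have hbsq0 : (0 : ℝ) < bsq := by linarith [hbsqβ, hβsq1]
  set c₀ := min (4 * (bsq - a ^ 2)) (4 * (-(bsq * (β ^ 2 - 1) + a ^ 2 - 2 * a * β ^ 2)))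
    with hc₀_def
  have hc₀ : 0 < c₀ := lt_min (by linarith) (by linarith)
  have hc₀a : c₀ ≤ 4 * (bsq - a ^ 2) := min_le_left _ _
  have hc₀b : c₀ ≤ 4 * (-(bsq * (β ^ 2 - 1) + a ^ 2 - 2 * a * β ^ 2)) := min_le_right _ _
  have hΦ : ∀ u : ℝ, 0 ≤ u → u ≤ β ^ 2 → 4 * (bsq * (u - 1) + a ^ 2 - 2 * a * u) ≤ -c₀ := by
    intro u hu0 huβ
    rcases le_or_gt (2 * a) bsq with h | h
    · linarith [mul_le_mul_of_nonneg_left huβ (show (0:ℝ) ≤ bsq - 2 * a by linarith), hc₀b]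
    · linarith [mul_le_mul_of_nonneg_left hu0 (show (0:ℝ) ≤ 2 * a - bsq by linarith), hc₀a]
  -- margins
  have hδ1 : 0 < β - a := by linarith
  have hδ2 : 0 < a + β - β ^ 2 := by linarith [hββ]
  set C₂ : ℝ := 2 * (a + β ^ 2) + 1 with hC₂_def
  have hC₂ : 0 < C₂ := by rw [hC₂_def]; linarith [hβsq1]
  set α₀ := min (min (β - a) (a + β - β ^ 2)) (min (c₀ / (8 * C₂)) 1) with hα₀_def
  have hα₀ : 0 < α₀ := lt_min (lt_min hδ1 hδ2) (lt_min (by positivity) one_pos)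
  -- invariance of [-β, β]
  have hinv : ∀ x' ε : ℝ, x' ∈ Icc (-β) β → |ε| ≤ α₀ → qm a x' + ε ∈ Icc (-β) β := by
    intro x' ε hx' hε
    have hx2 : x' ^ 2 ≤ β ^ 2 := sq_le_sq' hx'.1 hx'.2
    have hx20 : 0 ≤ x' ^ 2 := sq_nonneg _
    have hε1 : ε ≤ α₀ := (abs_le.mp hε).2
    have hε2 : -α₀ ≤ ε := (abs_le.mp hε).1
    have h1 : α₀ ≤ β - a := le_trans (min_le_left _ _) (min_le_left _ _)
    have h2 : α₀ ≤ a + β - β ^ 2 := le_trans (min_le_left _ _) (min_le_right _ _)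
    constructor
    · show -β ≤ a - x' ^ 2 + ε
      linarith
    · show a - x' ^ 2 + ε ≤ β
      linarith
  -- the contraction rate
  set Rsq := 4 - c₀ / (2 * bsq) with hRsq_def
  have hc2b : c₀ / (2 * bsq) < 2 := by
    rw [div_lt_iff₀ (by linarith : (0:ℝ) < 2 * bsq)]
    have ha2p : (0:ℝ) < a ^ 2 := by positivity
    linarith [hc₀a, hbsqa]
  have hRsq2 : 2 < Rsq := by rw [hRsq_def]; linarith
  have hRsq4 : Rsq < 4 := by
    have h : 0 < c₀ / (2 * bsq) := by positivity
    rw [hRsq_def]; linarith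
  set R := Real.sqrt Rsq with hR_def
  have hR0 : 0 < R := Real.sqrt_pos.mpr (by linarith)
  have hRsq' : R ^ 2 = Rsq := Real.sq_sqrt (by linarith)
  have hR2 : R < 2 := by nlinarith [hRsq', hRsq4, hR0]
  -- the key pointwise inequality
  have hkey : ∀ x' ε : ℝ, x' ∈ Icc (-β) β → |ε| ≤ α₀ →
      2 * |x'| * Real.sqrt (bsq - x' ^ 2) ≤ R * Real.sqrt (bsq - (qm a x' + ε) ^ 2) := by
    intro x' ε hx' hε
    have hqm : qm a x' = a - x' ^ 2 := rfl
    have hx2 : x' ^ 2 ≤ β ^ 2 := sq_le_sq' hx'.1 hx'.2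
    have hx20 : 0 ≤ x' ^ 2 := sq_nonneg _
    have hy'mem : qm a x' + ε ∈ Icc (-β) β := hinv x' ε hx' hε
    set y' := qm a x' + ε with hy'def
    have hy2 : y' ^ 2 ≤ β ^ 2 := sq_le_sq' hy'mem.1 hy'mem.2
    have h1 : 0 ≤ bsq - x' ^ 2 := by linarith
    have h2 : 0 ≤ bsq - y' ^ 2 := by linarith
    have hεc : |ε| ≤ c₀ / (8 * C₂) := le_trans hε (le_trans (min_le_right _ _) (min_le_left _ _))
    have hε1 : |ε| ≤ 1 := le_trans hε (le_trans (min_le_right _ _) (min_le_right _ _))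
    have hpert : y' ^ 2 - (a - x' ^ 2) ^ 2 ≤ c₀ / 8 := by
      have hdiff : y' ^ 2 - (a - x' ^ 2) ^ 2 = ε * (2 * (a - x' ^ 2) + ε) := by
        rw [hy'def, hqm]; ring
      have hax : |a - x' ^ 2| ≤ a + β ^ 2 := by
        rw [abs_le]; constructor <;> linarith [hx2, hx20]
      have hfac : |2 * (a - x' ^ 2) + ε| ≤ C₂ := by
        calc |2 * (a - x' ^ 2) + ε| ≤ |2 * (a - x' ^ 2)| + |ε| := abs_add_le _ _
          _ = 2 * |a - x' ^ 2| + |ε| := by rw [abs_mul]; norm_num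
          _ ≤ 2 * (a + β ^ 2) + 1 := by linarith
          _ = C₂ := by rw [hC₂_def]
      have habs : |ε * (2 * (a - x' ^ 2) + ε)| ≤ (c₀ / (8 * C₂)) * C₂ := by
        rw [abs_mul]
        exact mul_le_mul hεc hfac (abs_nonneg _) (div_nonneg hc₀.le (by linarith))
      have heq : (c₀ / (8 * C₂)) * C₂ = c₀ / 8 := by
        have hne : C₂ ≠ 0 := ne_of_gt hC₂
        field_simp
      rw [hdiff]
      calc ε * (2 * (a - x' ^ 2) + ε) ≤ |ε * (2 * (a - x' ^ 2) + ε)| := le_abs_self _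
        _ ≤ (c₀ / (8 * C₂)) * C₂ := habs
        _ = c₀ / 8 := heq
    have hΦu := hΦ (x' ^ 2) hx20 hx2
    have h3 : bsq - y' ^ 2 ≤ bsq := by linarith [sq_nonneg y']
    have h4 : c₀ * (bsq - y' ^ 2) ≤ c₀ * bsq := mul_le_mul_of_nonneg_left h3 hc₀.le
    have hfin : 4 * (bsq - y' ^ 2) - c₀ / 2 ≤ Rsq * (bsq - y' ^ 2) := by
      have e : Rsq * (bsq - y' ^ 2)
          = 4 * (bsq - y' ^ 2) - (c₀ * (bsq - y' ^ 2)) / (2 * bsq) := by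
        rw [hRsq_def]; field_simp
      have hdl : (c₀ * (bsq - y' ^ 2)) / (2 * bsq) ≤ c₀ / 2 := by
        rw [div_le_div_iff₀ (by linarith : (0:ℝ) < 2 * bsq) (by norm_num : (0:ℝ) < 2)]
        linarith [h4]
      rw [e]; linarith
    have halg : 4 * x' ^ 2 * (bsq - x' ^ 2)
        = 4 * (bsq - (a - x' ^ 2) ^ 2) + 4 * (bsq * (x' ^ 2 - 1) + a ^ 2 - 2 * a * x' ^ 2) := by
      ring
    have hsq : 4 * x' ^ 2 * (bsq - x' ^ 2) ≤ Rsq * (bsq - y' ^ 2) := by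
      have h5 : 4 * x' ^ 2 * (bsq - x' ^ 2) ≤ 4 * (bsq - y' ^ 2) - c₀ / 2 := by
        linarith [hpert, hΦu, halg]
      exact le_trans h5 hfin
    have hL : 2 * |x'| * Real.sqrt (bsq - x' ^ 2)
        = Real.sqrt (4 * x' ^ 2 * (bsq - x' ^ 2)) := by
      rw [show 4 * x' ^ 2 * (bsq - x' ^ 2) = (2 * x') ^ 2 * (bsq - x' ^ 2) by ring,
        Real.sqrt_mul (sq_nonneg _), Real.sqrt_sq_eq_abs, abs_mul, abs_two]
    have hRt : R * Real.sqrt (bsq - y' ^ 2) = Real.sqrt (Rsq * (bsq - y' ^ 2)) := by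
      rw [Real.sqrt_mul (by linarith : (0:ℝ) ≤ Rsq)]
    rw [hL, hRt]
    exact Real.sqrt_le_sqrt hsq
  -- final constants
  have hmβ : 0 < bsq - β ^ 2 := by linarith
  set C₁ := Real.sqrt bsq / Real.sqrt (bsq - β ^ 2) with hC₁_def
  have hC₁0 : 0 < C₁ :=
    div_pos (Real.sqrt_pos.mpr hbsq0) (Real.sqrt_pos.mpr hmβ)
  set R₁ := (R + 2) / 2 with hR₁_def
  have hRR₁ : R < R₁ := by rw [hR₁_def]; linarith
  have hR₁0 : 0 < R₁ := by rw [hR₁_def]; linarith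
  have hR₁2 : R₁ < 2 := by rw [hR₁_def]; linarith
  have hgt : 1 < R₁ / R := (one_lt_div hR0).mpr hRR₁
  obtain ⟨N₁, hN₁⟩ := pow_unbounded_of_one_lt C₁ hgt
  have hR₁2' : R₁ / 2 < 1 := by linarith
  obtain ⟨N₂, hN₂⟩ := exists_pow_lt_of_lt_one (by norm_num : (0:ℝ) < 1/6) hR₁2'
  refine ⟨C₁, hC₁0, R₁, ⟨hR₁0, hR₁2⟩, max N₁ N₂, α₀, hα₀, ?_⟩
  intro α hα0 hαα₀ θ x hx
  have hαb : ∀ n : ℕ, |α * φ ((d:ℝ) ^ n * θ)| ≤ α₀ := by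
    intro n
    rw [abs_mul, abs_of_pos hα0]
    calc α * |φ ((d:ℝ) ^ n * θ)| ≤ α * 1 := mul_le_mul_of_nonneg_left (hφb _) hα0.le
      _ = α := mul_one α
      _ ≤ α₀ := hαα₀.le
  have hX : ∀ k, fn a d φ α k θ x ∈ Icc (-β) β := by
    intro k
    induction k with
    | zero => simpa [fn_zero] using hx
    | succ n ih =>
      rw [fn_succ]
      exact hinv _ _ ih (hαb n)
  have hD : ∀ k, HasDerivAt (fun y => fn a d φ α k θ y)
      (∏ i ∈ Finset.range k, (-2 * fn a d φ α i θ x)) x := by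
    intro k
    induction k with
    | zero =>
      simpa [fn_zero] using (hasDerivAt_id' x)
    | succ n ih =>
      have h2 := ((hasDerivAt_const x a).sub (ih.pow 2)).add_const (α * φ ((d:ℝ) ^ n * θ))
      have hfun : (fun y => fn a d φ α (n+1) θ y)
          = fun y => a - (fn a d φ α n θ y) ^ 2 + α * φ ((d:ℝ) ^ n * θ) := by
        funext y; rw [fn_succ]; rfl
      rw [hfun, Finset.prod_range_succ]
      refine h2.congr_deriv ?_
      push_cast
      ring
  have hQ : ∀ k, |∏ i ∈ Finset.range k, (-2 * fn a d φ α i θ x)| * Real.sqrt (bsq - x ^ 2)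
      ≤ R ^ k * Real.sqrt (bsq - (fn a d φ α k θ x) ^ 2) := by
    intro k
    induction k with
    | zero => simp [fn_zero]
    | succ n ih =>
      rw [Finset.prod_range_succ, abs_mul, pow_succ]
      have hstep := hkey (fn a d φ α n θ x) (α * φ ((d:ℝ) ^ n * θ)) (hX n) (hαb n)
      have habs2 : |(-2 * fn a d φ α n θ x)| = 2 * |fn a d φ α n θ x| := by
        rw [abs_mul, abs_neg]; norm_num
      calc |∏ i ∈ Finset.range n, (-2 * fn a d φ α i θ x)| * |(-2 * fn a d φ α n θ x)|
            * Real.sqrt (bsq - x ^ 2)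
          = (|∏ i ∈ Finset.range n, (-2 * fn a d φ α i θ x)| * Real.sqrt (bsq - x ^ 2))
            * (2 * |fn a d φ α n θ x|) := by rw [habs2]; ring
        _ ≤ (R ^ n * Real.sqrt (bsq - (fn a d φ α n θ x) ^ 2)) * (2 * |fn a d φ α n θ x|) :=
            mul_le_mul_of_nonneg_right ih (by positivity)
        _ = R ^ n * (2 * |fn a d φ α n θ x| * Real.sqrt (bsq - (fn a d φ α n θ x) ^ 2)) := by
            ring
        _ ≤ R ^ n * (R * Real.sqrt (bsq - (fn a d φ α (n+1) θ x) ^ 2)) := by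
            apply mul_le_mul_of_nonneg_left _ (by positivity)
            rw [fn_succ]
            exact hstep
        _ = R ^ n * R * Real.sqrt (bsq - (fn a d φ α (n+1) θ x) ^ 2) := by ring
  have hbound : ∀ k, |deriv (fun y => fn a d φ α k θ y) x| ≤ C₁ * R ^ k := by
    intro k
    rw [(hD k).deriv]
    have h1 := hQ k
    have h2 : Real.sqrt (bsq - (fn a d φ α k θ x) ^ 2) ≤ Real.sqrt bsq :=
      Real.sqrt_le_sqrt (by linarith [sq_nonneg (fn a d φ α k θ x)])
    have h3 : Real.sqrt (bsq - β ^ 2) ≤ Real.sqrt (bsq - x ^ 2) := by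
      apply Real.sqrt_le_sqrt
      have hx2 : x ^ 2 ≤ β ^ 2 := sq_le_sq' hx.1 hx.2
      linarith
    have h4 : 0 < Real.sqrt (bsq - β ^ 2) := Real.sqrt_pos.mpr hmβ
    have h5 : |∏ i ∈ Finset.range k, (-2 * fn a d φ α i θ x)| * Real.sqrt (bsq - β ^ 2)
        ≤ R ^ k * Real.sqrt bsq := by
      calc |∏ i ∈ Finset.range k, (-2 * fn a d φ α i θ x)| * Real.sqrt (bsq - β ^ 2)
          ≤ |∏ i ∈ Finset.range k, (-2 * fn a d φ α i θ x)| * Real.sqrt (bsq - x ^ 2) :=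
            mul_le_mul_of_nonneg_left h3 (abs_nonneg _)
        _ ≤ R ^ k * Real.sqrt (bsq - (fn a d φ α k θ x) ^ 2) := h1
        _ ≤ R ^ k * Real.sqrt bsq := mul_le_mul_of_nonneg_left h2 (by positivity)
    have heq : C₁ * R ^ k = (R ^ k * Real.sqrt bsq) / Real.sqrt (bsq - β ^ 2) := by
      rw [hC₁_def]; ring
    rw [heq, le_div_iff₀ h4]
    exact h5
  constructor
  · intro k
    calc |deriv (fun y => fn a d φ α k θ y) x| ≤ C₁ * R ^ k := hbound k
      _ ≤ C₁ * R₁ ^ k :=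
        mul_le_mul_of_nonneg_left (pow_le_pow_left₀ hR0.le hRR₁.le k) hC₁0.le
  · intro k hk
    have hk1 : N₁ ≤ k := le_trans (le_max_left _ _) hk
    have hk2 : N₂ ≤ k := le_trans (le_max_right _ _) hk
    constructor
    · have h6 : (R₁ / R) ^ N₁ ≤ (R₁ / R) ^ k := pow_le_pow_right₀ hgt.le hk1
      have h8 : C₁ ≤ (R₁ / R) ^ k := le_trans hN₁.le h6
      have h7 : C₁ * R ^ k ≤ R₁ ^ k := by
        calc C₁ * R ^ k ≤ (R₁ / R) ^ k * R ^ k :=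
              mul_le_mul_of_nonneg_right h8 (by positivity)
          _ = R₁ ^ k := by
              rw [div_pow, div_mul_cancel₀]
              positivity
      exact le_trans (hbound k) h7
    · have h9 : (R₁ / 2) ^ k ≤ (R₁ / 2) ^ N₂ :=
        pow_le_pow_of_le_one (by positivity) (by linarith) hk2
      have h10 : (2:ℝ) ^ k ≤ (d:ℝ) ^ k := by
        apply pow_le_pow_left₀ (by norm_num)
        exact_mod_cast hd
      have h2ne : ((2:ℝ)) ^ k ≠ 0 := by positivity
      have hsplit : (R₁ / 2) ^ k * 2 ^ k = R₁ ^ k := by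
        rw [div_pow, div_mul_cancel₀ _ h2ne]
      calc R₁ ^ k = (R₁ / 2) ^ k * 2 ^ k := hsplit.symm
        _ ≤ (1/6) * 2 ^ k :=
            mul_le_mul_of_nonneg_right (le_trans h9 hN₂.le) (by positivity)
        _ ≤ (1/6) * d ^ k :=
            mul_le_mul_of_nonneg_left h10 (by norm_num)
        _ = (d:ℝ) ^ k / 6 := by ring
end
end

section
/- For all 1 ≤ m < n ≤ N(α)+1 and any points x_i ∈ I_i for i = m, m+1, …, n−1, one has e^{−1}·|(f^{n−m})'(c_m)| ≤ ∏_{i=m}^{n−1} |f'(x_i)| ≤ e·|(f^{n−m})'(c_m)|. -/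
open Set MeasureTheory Filter
open scoped ENNReal

noncomputable section

/-- Endpoints of the shadowing intervals: `IEnd a α n` gives the endpoints of `I_{n+1}`, where
`I₁ = [c₁ - 2α, c₁ + 2α]` and `I_{n+1}` is the closed interval containing `f(I_n)` both of whose
complementary components in `I_{n+1}` have length `α`. -/
def IEnd (a α : ℝ) : ℕ → ℝ × ℝ
  | 0 => (qm a 0 - 2 * α, qm a 0 + 2 * α)
  | n + 1 =>
      (sInf (qm a '' Set.Icc (IEnd a α n).1 (IEnd a α n).2) - α,
        sSup (qm a '' Set.Icc (IEnd a α n).1 (IEnd a α n).2) + α)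

/-- The shadowing interval `I_n`, for `n ≥ 1`. -/
def Iseq (a α : ℝ) (n : ℕ) : Set ℝ := Set.Icc (IEnd a α (n - 1)).1 (IEnd a α (n - 1)).2

/-- The length `|I_{n+1}|` of the shadowing interval `I_{n+1}`. -/
def len (a α : ℝ) (n : ℕ) : ℝ := (IEnd a α n).2 - (IEnd a α n).1

/-- `N(α)`: the maximal integer `N` such that `|I_n| < ξ₀` for all `1 ≤ n ≤ N` and
`∑_{n=1}^{N} |I_n| ≤ ξ₀`. -/
def Nal (a ξ₀ α : ℝ) : ℕ :=
  sSup {N : ℕ | (∀ n : ℕ, 1 ≤ n → n ≤ N → len a α (n - 1) < ξ₀) ∧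
    ∑ n ∈ Finset.range N, len a α n ≤ ξ₀}

lemma qm_hasDerivAt (a x : ℝ) : HasDerivAt (qm a) (-(2 * x)) x := by
  have h := (hasDerivAt_pow 2 x).const_sub a
  unfold qm
  simpa using h

lemma qm_cont (a : ℝ) : Continuous (qm a) := by
  unfold qm; fun_prop

lemma qm_iter_hasDerivAt (a : ℝ) (k : ℕ) (y : ℝ) :
    HasDerivAt ((qm a)^[k]) (∏ j ∈ Finset.range k, (-(2 * (qm a)^[j] y))) y := by
  induction k with
  | zero => simpa using hasDerivAt_id y
  | succ k ih =>
    have h1 : HasDerivAt (qm a) (-(2 * (qm a)^[k] y)) ((qm a)^[k] y) :=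
      qm_hasDerivAt a _
    have h2 := h1.comp y ih
    rw [Function.iterate_succ', Finset.prod_range_succ, mul_comm]
    exact h2

lemma IEnd_props (a α : ℝ) (hα : 0 < α) (n : ℕ) :
    (qm a)^[n+1] 0 ∈ Set.Icc (IEnd a α n).1 (IEnd a α n).2 ∧
    2 * α ≤ (IEnd a α n).2 - (IEnd a α n).1 := by
  induction n with
  | zero =>
    refine ⟨?_, by simp [IEnd]; linarith⟩
    simp only [zero_add, Function.iterate_one, IEnd, Set.mem_Icc]
    constructor <;> linarith
  | succ n ih =>
    obtain ⟨hmem, hlen⟩ := ih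
    set lo := (IEnd a α n).1
    set hi := (IEnd a α n).2
    have hS : IsCompact (qm a '' Set.Icc lo hi) := isCompact_Icc.image (qm_cont a)
    have hmem2 : qm a ((qm a)^[n+1] 0) ∈ qm a '' Set.Icc lo hi :=
      Set.mem_image_of_mem _ hmem
    have h1 : sInf (qm a '' Set.Icc lo hi) ≤ qm a ((qm a)^[n+1] 0) :=
      csInf_le hS.bddBelow hmem2
    have h2 : qm a ((qm a)^[n+1] 0) ≤ sSup (qm a '' Set.Icc lo hi) :=
      le_csSup hS.bddAbove hmem2
    have hit : (qm a)^[n+2] 0 = qm a ((qm a)^[n+1] 0) := by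
      rw [Function.iterate_succ_apply']
    refine ⟨?_, ?_⟩
    · simp only [IEnd, Set.mem_Icc, hit]
      constructor <;> linarith
    · simp only [IEnd]
      linarith

lemma len_pos (a α : ℝ) (hα : 0 < α) (n : ℕ) : 2 * α ≤ len a α n :=
  (IEnd_props a α hα n).2

lemma Nal_mem (a ξ₀ α : ℝ) (hα : 0 < α) (hξ : 0 < ξ₀) :
    (∀ n : ℕ, 1 ≤ n → n ≤ Nal a ξ₀ α → len a α (n-1) < ξ₀) ∧
    ∑ n ∈ Finset.range (Nal a ξ₀ α), len a α n ≤ ξ₀ := by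
  have hne : Set.Nonempty {N : ℕ | (∀ n : ℕ, 1 ≤ n → n ≤ N → len a α (n - 1) < ξ₀) ∧
      ∑ n ∈ Finset.range N, len a α n ≤ ξ₀} := ⟨0, by simp [hξ.le]; omega⟩
  have hbdd : BddAbove {N : ℕ | (∀ n : ℕ, 1 ≤ n → n ≤ N → len a α (n - 1) < ξ₀) ∧
      ∑ n ∈ Finset.range N, len a α n ≤ ξ₀} := by
    refine ⟨Nat.floor (ξ₀ / (2*α)), fun N hN => ?_⟩
    obtain ⟨-, hsum⟩ := hN
    have hlow : (N : ℝ) * (2*α) ≤ ∑ n ∈ Finset.range N, len a α n := by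
      calc (N : ℝ) * (2*α) = ∑ _n ∈ Finset.range N, 2*α := by
            rw [Finset.sum_const, Finset.card_range, nsmul_eq_mul]
        _ ≤ _ := Finset.sum_le_sum fun i _ => len_pos a α hα i
    have : (N : ℝ) ≤ ξ₀ / (2*α) := by
      rw [le_div_iff₀ (by linarith)]
      linarith
    exact Nat.le_floor this
  have := Nat.sSup_mem hne hbdd
  exact this

lemma exp_neg_le (t : ℝ) (h0 : 0 ≤ t) (h1 : t ≤ 1/2) : Real.exp (-(2*t)) ≤ 1 - t := by
  have h2 := Real.add_one_le_exp (2*t)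
  have h3 : Real.exp (-(2*t)) * Real.exp (2*t) = 1 := by
    rw [← Real.exp_add]; ring_nf; exact Real.exp_zero
  nlinarith [Real.exp_pos (2*t), Real.exp_pos (-(2*t))]

/-- distortion along the shadowing intervals. For all `1 ≤ m < n ≤ N(α)+1`
and any `x_i ∈ I_i` (`m ≤ i < n`),
`e⁻¹ |(f^{n-m})'(c_m)| ≤ ∏_{i=m}^{n-1} |f'(x_i)| ≤ e |(f^{n-m})'(c_m)|`. -/
theorem shadowing_distortion
    (a : ℝ) (ha : a ∈ Set.Ioo (1 : ℝ) 2) (hpre : StrictlyPreperiodic a)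
    (ξ₀ : ℝ) (hξ₀ : 0 < ξ₀)
    (hcrit : ∀ i : ℕ, 1 ≤ i → (qm a)^[i] 0 ∉ Set.Ioo (-(2 * ξ₀)) (2 * ξ₀))
    (α : ℝ) (hα : 0 < α) (hαξ : α ≤ ξ₀) :
    ∀ m n : ℕ, 1 ≤ m → m < n → n ≤ Nal a ξ₀ α + 1 →
      ∀ x : ℕ → ℝ, (∀ i : ℕ, m ≤ i → i < n → x i ∈ Iseq a α i) →
        (Real.exp 1)⁻¹ * |deriv ((qm a)^[n - m]) ((qm a)^[m] 0)| ≤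
            ∏ i ∈ Finset.Ico m n, |deriv (qm a) (x i)| ∧
          ∏ i ∈ Finset.Ico m n, |deriv (qm a) (x i)| ≤
            Real.exp 1 * |deriv ((qm a)^[n - m]) ((qm a)^[m] 0)| := by
  intro m n hm hmn hnN x hx
  set c : ℕ → ℝ := fun i => (qm a)^[i] 0 with hc
  set L : ℕ → ℝ := fun i => len a α (i - 1) with hL
  set t : ℕ → ℝ := fun i => L i / (2 * ξ₀) with ht
  obtain ⟨hlen_lt, hsum_le⟩ := Nal_mem a ξ₀ α hα hξ₀
  -- basic pointwise facts
  have hfacts : ∀ i ∈ Finset.Ico m n,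
      2 * ξ₀ ≤ |c i| ∧ |x i - c i| ≤ L i ∧ 0 ≤ L i ∧ L i < ξ₀ := by
    intro i hi
    simp only [Finset.mem_Ico] at hi
    have hi1 : 1 ≤ i := le_trans hm hi.1
    have hiN : i ≤ Nal a ξ₀ α := by omega
    have hprops := IEnd_props a α hα (i - 1)
    have hidx : i - 1 + 1 = i := by omega
    rw [hidx] at hprops
    have hcmem : c i ∈ Set.Icc (IEnd a α (i-1)).1 (IEnd a α (i-1)).2 := hprops.1
    have hxmem : x i ∈ Set.Icc (IEnd a α (i-1)).1 (IEnd a α (i-1)).2 := hx i hi.1 hi.2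
    refine ⟨?_, ?_, ?_, ?_⟩
    · have hcr := hcrit i hi1
      simp only [Set.mem_Ioo, not_and_or, not_lt] at hcr
      rcases hcr with h | h
      · rw [abs_of_nonpos (by linarith)]; linarith
      · rw [abs_of_nonneg (by linarith)]; linarith
    · simp only [Set.mem_Icc] at hcmem hxmem
      rw [abs_sub_le_iff]
      obtain ⟨h1, h2⟩ := hcmem
      obtain ⟨h3, h4⟩ := hxmem
      constructor <;> (simp only [hL, len]; linarith)
    · have := len_pos a α hα (i-1); simp only [hL]; linarith
    · exact hlen_lt i hi1 hiN
  -- sum of lengths bound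
  have hsumL : ∑ i ∈ Finset.Ico m n, L i ≤ ξ₀ := by
    have e1 : ∑ i ∈ Finset.Ico m n, L i = ∑ j ∈ Finset.Ico (m-1) (n-1), len a α j := by
      rw [Finset.sum_Ico_eq_sum_range, Finset.sum_Ico_eq_sum_range]
      have : n - 1 - (m - 1) = n - m := by omega
      rw [this]
      refine Finset.sum_congr rfl fun j _ => ?_
      simp only [hL]
      congr 1
      omega
    rw [e1]
    calc ∑ j ∈ Finset.Ico (m-1) (n-1), len a α j
        ≤ ∑ j ∈ Finset.range (Nal a ξ₀ α), len a α j := by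
          apply Finset.sum_le_sum_of_subset_of_nonneg
          · intro j hj
            simp only [Finset.mem_Ico] at hj
            simp only [Finset.mem_range]
            omega
          · intro j _ _
            have := len_pos a α hα j; linarith
      _ ≤ ξ₀ := hsum_le
  have hsumt : ∑ i ∈ Finset.Ico m n, t i ≤ 1/2 := by
    have : ∑ i ∈ Finset.Ico m n, t i = (∑ i ∈ Finset.Ico m n, L i) / (2*ξ₀) := by
      rw [Finset.sum_div]
    rw [this, div_le_iff₀ (by linarith)]
    linarith
  -- |deriv (qm a) (x i)| = 2 * |x i|
  have hderx : ∀ i, |deriv (qm a) (x i)| = 2 * |x i| := by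
    intro i
    rw [(qm_hasDerivAt a (x i)).deriv, abs_neg, abs_mul, abs_two]
  -- deriv of iterate
  have hderiter : |deriv ((qm a)^[n - m]) (c m)| = ∏ i ∈ Finset.Ico m n, (2 * |c i|) := by
    rw [(qm_iter_hasDerivAt a (n-m) (c m)).deriv, Finset.abs_prod]
    rw [Finset.prod_Ico_eq_prod_range]
    refine Finset.prod_congr rfl fun j _ => ?_
    have : (qm a)^[j] (c m) = c (m + j) := by
      simp only [hc, add_comm m j, Function.iterate_add_apply]
    rw [this, abs_neg, abs_mul, abs_two]
  set P := ∏ i ∈ Finset.Ico m n, (2 * |c i|) with hP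
  have hPnn : 0 ≤ P := Finset.prod_nonneg fun i _ => by positivity
  -- upper bound
  have hupper : ∏ i ∈ Finset.Ico m n, (2 * |x i|) ≤ P * Real.exp 1 := by
    have step : ∏ i ∈ Finset.Ico m n, (2 * |x i|)
        ≤ ∏ i ∈ Finset.Ico m n, (2 * |c i| * Real.exp (t i)) := by
      apply Finset.prod_le_prod (fun i _ => by positivity)
      intro i hi
      obtain ⟨hci, hxc, hL0, hLlt⟩ := hfacts i hi
      have habs : |x i| ≤ |c i| + L i := by
        calc |x i| = |c i + (x i - c i)| := by ring_nf
          _ ≤ |c i| + |x i - c i| := abs_add_le _ _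
          _ ≤ |c i| + L i := by linarith
      have hexp := Real.add_one_le_exp (t i)
      have htL : t i * (2 * ξ₀) = L i := by
        simp only [ht]; field_simp
      have ht0 : 0 ≤ t i := by positivity
      nlinarith [abs_nonneg (c i)]
    calc ∏ i ∈ Finset.Ico m n, (2 * |x i|)
        ≤ ∏ i ∈ Finset.Ico m n, (2 * |c i| * Real.exp (t i)) := step
      _ = P * Real.exp (∑ i ∈ Finset.Ico m n, t i) := by
          rw [Finset.prod_mul_distrib, Real.exp_sum]
      _ ≤ P * Real.exp 1 := by
          apply mul_le_mul_of_nonneg_left _ hPnn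
          exact Real.exp_le_exp.2 (by linarith)
  -- lower bound
  have hlower : P * (Real.exp 1)⁻¹ ≤ ∏ i ∈ Finset.Ico m n, (2 * |x i|) := by
    have step : ∏ i ∈ Finset.Ico m n, (2 * |c i| * Real.exp (-(2 * t i)))
        ≤ ∏ i ∈ Finset.Ico m n, (2 * |x i|) := by
      apply Finset.prod_le_prod (fun i _ => by positivity)
      intro i hi
      obtain ⟨hci, hxc, hL0, hLlt⟩ := hfacts i hi
      have habs : |c i| - L i ≤ |x i| := by
        have : |c i| ≤ |x i| + |x i - c i| := by
          calc |c i| = |x i - (x i - c i)| := by ring_nf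
            _ ≤ |x i| + |x i - c i| := abs_sub _ _
        linarith
      have ht0 : 0 ≤ t i := by positivity
      have ht12 : t i ≤ 1/2 := by
        simp only [ht]
        rw [div_le_iff₀ (by linarith)]
        linarith
      have hexp := exp_neg_le (t i) ht0 ht12
      have htL : t i * (2 * ξ₀) = L i := by
        simp only [ht]; field_simp
      nlinarith [abs_nonneg (c i), Real.exp_pos (-(2 * t i))]
    have e2 : ∏ i ∈ Finset.Ico m n, (2 * |c i| * Real.exp (-(2 * t i)))
        = P * Real.exp (∑ i ∈ Finset.Ico m n, -(2 * t i)) := by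
      rw [Finset.prod_mul_distrib, Real.exp_sum]
    have e3 : P * (Real.exp 1)⁻¹ ≤ P * Real.exp (∑ i ∈ Finset.Ico m n, -(2 * t i)) := by
      apply mul_le_mul_of_nonneg_left _ hPnn
      rw [← Real.exp_neg]
      apply Real.exp_le_exp.2
      rw [Finset.sum_neg_distrib]
      have : ∑ i ∈ Finset.Ico m n, 2 * t i = 2 * ∑ i ∈ Finset.Ico m n, t i := by
        rw [Finset.mul_sum]
      rw [this]
      linarith
    linarith [e2 ▸ step]
  -- conclude
  have hprodeq : ∏ i ∈ Finset.Ico m n, |deriv (qm a) (x i)|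
      = ∏ i ∈ Finset.Ico m n, (2 * |x i|) :=
    Finset.prod_congr rfl fun i _ => hderx i
  rw [hprodeq, hderiter]
  exact ⟨by linarith [hlower], by linarith [hupper]⟩
end
end

section
/- Every T ∈ 𝒯_φ is not identically zero. More precisely, if l ∈ ℕ is large enough that C₁·R₁d^{−l}/(1 − R₁d^{−l}) ≤ 1/2, then for any T ∈ 𝒯_φ with data (a_n, k_n), choosing θ₀ ∈ [0,1) with |φ̂^{(l)}(θ₀)| = M_l := sup_{θ∈ℝ}|φ̂^{(l)}(θ)| (which is positive since φ is non-constant), one has d^{l−1}·|T^{(l−1)}(dθ₀ − k₁)| ≥ M_l/2 > 0. -/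
open Set MeasureTheory Filter
open scoped ENNReal

noncomputable section

/-! ### Auxiliary lemmas -/

lemma aux_per_deriv {f : ℝ → ℝ} (hp : Function.Periodic f 1) :
    Function.Periodic (deriv f) 1 := by
  intro x
  have h : (fun y : ℝ => f (y + 1)) = f := funext hp
  calc deriv f (x + 1) = deriv (fun y => f (y + 1)) x := (deriv_comp_add_const f 1 x).symm
    _ = deriv f x := by rw [h]

lemma aux_per_iteratedDeriv {f : ℝ → ℝ} (hp : Function.Periodic f 1) (m : ℕ) :
    Function.Periodic (iteratedDeriv m f) 1 := by
  induction m with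
  | zero => simpa [iteratedDeriv_zero] using hp
  | succ m ih => rw [iteratedDeriv_succ]; exact aux_per_deriv ih

lemma aux_iteratedDeriv_comp_affine {f : ℝ → ℝ} (hf : ContDiff ℝ (⊤ : WithTop ℕ∞) f)
    (m : ℕ) (c r : ℝ) :
    iteratedDeriv m (fun θ => f ((θ + c) / r)) =
      fun θ => r⁻¹ ^ m * iteratedDeriv m f ((θ + c) / r) := by
  have h1 : (fun θ : ℝ => f ((θ + c) / r)) = fun θ => f (r⁻¹ * (θ + c)) := by
    funext θ; rw [div_eq_inv_mul]
  rw [h1]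
  calc iteratedDeriv m (fun θ : ℝ => f (r⁻¹ * (θ + c)))
      = fun t => iteratedDeriv m (fun z : ℝ => f (r⁻¹ * z)) (t + c) :=
        iteratedDeriv_comp_add_const m (fun z : ℝ => f (r⁻¹ * z)) c
    _ = fun θ => r⁻¹ ^ m * iteratedDeriv m f ((θ + c) / r) := by
        rw [iteratedDeriv_comp_const_mul (f := f) (n := m) (hf.of_le le_top) r⁻¹]
        funext t
        rw [div_eq_inv_mul]

lemma aux_iteratedDeriv_const_mul_fun {f : ℝ → ℝ} (hf : ContDiff ℝ (⊤ : WithTop ℕ∞) f)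
    (m : ℕ) (c : ℝ) :
    iteratedDeriv m (fun θ => c * f θ) = fun θ => c * iteratedDeriv m f θ := by
  funext x
  rw [← iteratedDerivWithin_univ, ← iteratedDerivWithin_univ]
  exact iteratedDerivWithin_const_mul (Set.mem_univ x) uniqueDiffOn_univ c
    (hf.of_le le_top).contDiffWithinAt

lemma aux_const_zero {g : ℝ → ℝ} (hg : Differentiable ℝ g) (hp : Function.Periodic g 1)
    {c : ℝ} (hc : ∀ x, deriv g x = c) : c = 0 := by
  have hdiff : Differentiable ℝ (fun x : ℝ => g x - c * x) :=
    hg.sub (differentiable_id.const_mul c)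
  have h : ∀ x : ℝ, deriv (fun x : ℝ => g x - c * x) x = 0 := by
    intro x
    have hcx : HasDerivAt (fun y : ℝ => c * y) c x := by
      simpa using (hasDerivAt_id x).const_mul c
    have hgx : HasDerivAt g c x := hc x ▸ (hg x).hasDerivAt
    exact (hgx.sub hcx).deriv.trans (sub_self c)
  have h2 := is_const_of_deriv_eq_zero hdiff h 1 0
  have h3 := hp 0
  simp at h2 h3
  linarith

lemma aux_deriv_zero {φ : ℝ → ℝ} (hφ : ContDiff ℝ (⊤ : WithTop ℕ∞) φ)
    (hp : Function.Periodic φ 1) :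
    ∀ j : ℕ, (∀ x, iteratedDeriv (j + 1) φ x = 0) → ∀ x, deriv φ x = 0 := by
  intro j
  induction j with
  | zero => intro h x; simpa [iteratedDeriv_one] using h x
  | succ j ih =>
    intro h
    apply ih
    have hlt : ∀ i : ℕ, (i : WithTop ℕ∞) < ⊤ := fun i => by
      exact_mod_cast WithTop.coe_lt_top (i : ℕ∞)
    have hdiff : Differentiable ℝ (iteratedDeriv (j + 1) φ) :=
      hφ.differentiable_iteratedDeriv _ (hlt _)
    have hconst : ∀ x, iteratedDeriv (j + 1) φ x = iteratedDeriv (j + 1) φ 0 := by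
      intro x
      apply is_const_of_deriv_eq_zero hdiff
      intro y
      rw [← iteratedDeriv_succ]
      exact h y
    have hc : ∀ x, deriv (iteratedDeriv j φ) x = iteratedDeriv (j + 1) φ 0 := by
      intro x
      rw [← iteratedDeriv_succ]
      exact hconst x
    have hzero : iteratedDeriv (j + 1) φ 0 = 0 :=
      aux_const_zero (hφ.differentiable_iteratedDeriv _ (hlt _))
        (aux_per_iteratedDeriv hp j) hc
    intro x
    rw [hconst x, hzero]

/-- Every `T ∈ 𝒯_φ` is not identically zero: if `l` is large enough that
`C₁ R₁ d^{-l} / (1 - R₁ d^{-l}) ≤ 1/2`, `T ∈ 𝒯_φ` has data `(bₙ, kₙ)`, and `θ₀ ∈ [0,1)`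
attains `M_l = sup_θ |φ̂^{(l)}(θ)|`, then `M_l > 0` and
`d^{l-1} |T^{(l-1)}(dθ₀ - k₁)| ≥ M_l / 2`. -/
theorem tclass_not_identically_zero
    (a : ℝ) (ha : a ∈ Set.Ioo (1 : ℝ) 2) (hpre : StrictlyPreperiodic a)
    (d : ℕ) (hd : 2 ≤ d)
    (φ : ℝ → ℝ) (hφa : ∀ x : ℝ, AnalyticAt ℝ φ x) (hφp : Function.Periodic φ 1)
    (hφnc : ∃ s t : ℝ, φ s ≠ φ t) (hφb : ∀ θ : ℝ, |φ θ| ≤ 1)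
    (C₁ R₁ : ℝ) (hC₁ : 0 < C₁) (hR₁ : R₁ ∈ Set.Ioo (0 : ℝ) 2)
    (l : ℕ) (hl : 1 ≤ l)
    (hlbig : C₁ * (R₁ / (d : ℝ) ^ l) / (1 - R₁ / (d : ℝ) ^ l) ≤ 1 / 2)
    (T : ℝ → ℝ) (b : ℕ → ℝ) (k : ℕ → ℕ)
    (hk : ∀ n : ℕ, 1 ≤ n → k n < d ^ n)
    (hb : ∀ n : ℕ, 1 ≤ n → |b n| ≤ C₁ * (R₁ / d) ^ n)
    (hT : ∀ θ : ℝ, T θ = deriv φ ((θ + (k 1 : ℝ)) / d) +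
      ∑' n : ℕ, b (n + 1) * deriv φ ((θ + (k (n + 1) : ℝ)) / (d : ℝ) ^ (n + 2)))
    (M : ℝ) (hM : M = ⨆ θ : ℝ, |iteratedDeriv l φ θ|)
    (θ₀ : ℝ) (hθ₀ : θ₀ ∈ Set.Ico (0 : ℝ) 1) (hθ₀max : |iteratedDeriv l φ θ₀| = M) :
    0 < M ∧
      M / 2 ≤ (d : ℝ) ^ (l - 1) * |iteratedDeriv (l - 1) T ((d : ℝ) * θ₀ - (k 1 : ℝ))| := by
  obtain ⟨m, rfl⟩ : ∃ m, l = m + 1 := ⟨l - 1, by omega⟩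
  have hlt : ∀ i : ℕ, (i : WithTop ℕ∞) < ⊤ := fun i => by
    exact_mod_cast WithTop.coe_lt_top (i : ℕ∞)
  -- basic facts about φ
  have hφtop : ContDiff ℝ (⊤ : WithTop ℕ∞) φ :=
    contDiff_iff_contDiffAt.mpr fun x => (hφa x).contDiffAt
  have hφan : AnalyticOnNhd ℝ φ Set.univ := fun x _ => hφa x
  have hderiv_top : ContDiff ℝ (⊤ : WithTop ℕ∞) (deriv φ) :=
    contDiff_iff_contDiffAt.mpr fun x => (hφan.deriv x (Set.mem_univ x)).contDiffAt
  have hD2 : (2 : ℝ) ≤ (d : ℝ) := by exact_mod_cast hd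
  have hD0 : (0 : ℝ) < (d : ℝ) := by linarith
  have hD1 : (1 : ℝ) ≤ (d : ℝ) := by linarith
  -- uniform bounds on the iterated derivatives of φ
  have hBex : ∀ mm : ℕ, ∃ K : ℝ, 0 ≤ K ∧ ∀ θ, |iteratedDeriv mm φ θ| ≤ K := by
    intro mm
    have hcont : Continuous fun θ => |iteratedDeriv mm φ θ| :=
      (hφtop.continuous_iteratedDeriv mm le_top).abs
    obtain ⟨x₀, hx₀, hmax⟩ := (isCompact_Icc (a := (0:ℝ)) (b := 1)).exists_isMaxOn
      ⟨0, by norm_num⟩ hcont.continuousOn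
    refine ⟨|iteratedDeriv mm φ x₀|, abs_nonneg _, fun θ => ?_⟩
    have hper := aux_per_iteratedDeriv hφp mm
    have h := hper.sub_int_mul_eq (x := θ) ⌊θ⌋
    rw [mul_one] at h
    have h1 : iteratedDeriv mm φ θ = iteratedDeriv mm φ (Int.fract θ) := by
      rw [← Int.self_sub_floor θ]
      exact h.symm
    rw [h1]
    exact hmax ⟨Int.fract_nonneg θ, (Int.fract_lt_one θ).le⟩
  choose B hB0 hB using hBex
  -- M bounds the (m+1)-st iterated derivative everywhere
  have hbdd : BddAbove (Set.range fun θ => |iteratedDeriv (m + 1) φ θ|) := by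
    refine ⟨B (m + 1), ?_⟩
    rintro _ ⟨θ, rfl⟩
    exact hB (m + 1) θ
  have hφl_le : ∀ θ, |iteratedDeriv (m + 1) φ θ| ≤ M := by
    intro θ
    rw [hM]
    exact le_ciSup hbdd θ
  have hM0 : 0 ≤ M := hθ₀max ▸ abs_nonneg _
  -- positivity of M
  have hMpos : 0 < M := by
    rcases hM0.lt_or_eq with h | h
    · exact h
    · exfalso
      have hzero : ∀ θ, iteratedDeriv (m + 1) φ θ = 0 := by
        intro θ
        have h2 := hφl_le θ
        rw [← h] at h2
        exact abs_nonpos_iff.mp h2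
      have hder0 := aux_deriv_zero hφtop hφp m hzero
      obtain ⟨s, t, hst⟩ := hφnc
      exact hst (is_const_of_deriv_eq_zero (hφtop.differentiable (by simp)) hder0 s t)
  refine ⟨hMpos, ?_⟩
  -- geometric ratios
  have hR₁0 : 0 < R₁ := hR₁.1
  have hr0 : 0 < R₁ / (d : ℝ) := div_pos hR₁0 hD0
  have hr1 : R₁ / (d : ℝ) < 1 := (div_lt_one hD0).mpr (lt_of_lt_of_le hR₁.2 hD2)
  set q : ℝ := R₁ / (d : ℝ) ^ (m + 1) with hqdef
  have hDl2 : (2 : ℝ) ≤ (d : ℝ) ^ (m + 1) := le_trans hD2 (le_self_pow₀ hD1 (by omega))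
  have hq0 : 0 < q := div_pos hR₁0 (by positivity)
  have hq1 : q < 1 := (div_lt_one (by positivity)).mpr (lt_of_lt_of_le hR₁.2 hDl2)
  -- the summand functions
  set g : ℕ → ℝ → ℝ := fun n θ =>
    b (n + 1) * deriv φ ((θ + (k (n + 1) : ℝ)) / (d : ℝ) ^ (n + 2)) with hgdef
  have hψc : ∀ n : ℕ, ContDiff ℝ (⊤ : WithTop ℕ∞)
      (fun x : ℝ => deriv φ ((x + (k (n + 1) : ℝ)) / (d : ℝ) ^ (n + 2))) := fun n =>
    hderiv_top.comp ((contDiff_id.add contDiff_const).div_const _)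
  have hgc : ∀ n, ContDiff ℝ (⊤ : WithTop ℕ∞) (g n) := fun n =>
    ContDiff.mul contDiff_const (hψc n)
  -- formula for the iterated derivatives of the summands
  have hgder : ∀ (mm n : ℕ) (θ : ℝ), iteratedDeriv mm (g n) θ =
      b (n + 1) * ((((d : ℝ) ^ (n + 2))⁻¹) ^ mm *
        iteratedDeriv (mm + 1) φ ((θ + (k (n + 1) : ℝ)) / (d : ℝ) ^ (n + 2))) := by
    intro mm n θ
    have step1 : iteratedDeriv mm (g n) θ = b (n + 1) *
        iteratedDeriv mm (fun x : ℝ => deriv φ ((x + (k (n + 1) : ℝ)) / (d : ℝ) ^ (n + 2))) θ :=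
      congrFun (aux_iteratedDeriv_const_mul_fun (hψc n) mm (b (n + 1))) θ
    have step2 : iteratedDeriv mm
        (fun x : ℝ => deriv φ ((x + (k (n + 1) : ℝ)) / (d : ℝ) ^ (n + 2))) θ =
        (((d : ℝ) ^ (n + 2))⁻¹) ^ mm *
          iteratedDeriv (mm + 1) φ ((θ + (k (n + 1) : ℝ)) / (d : ℝ) ^ (n + 2)) := by
      have h := congrFun (aux_iteratedDeriv_comp_affine hderiv_top mm
        ((k (n + 1) : ℝ)) ((d : ℝ) ^ (n + 2))) θ
      rw [h, ← iteratedDeriv_succ']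
    rw [step1, step2]
  -- uniform bound on the iterated derivatives of the summands
  have hgb : ∀ (mm n : ℕ) (θ : ℝ), |iteratedDeriv mm (g n) θ| ≤
      (C₁ * B (mm + 1)) * (R₁ / (d : ℝ)) ^ (n + 1) := by
    intro mm n θ
    rw [hgder mm n θ]
    have h1 : |b (n + 1)| ≤ C₁ * (R₁ / (d : ℝ)) ^ (n + 1) := hb (n + 1) (by omega)
    have h2 : |(((d : ℝ) ^ (n + 2))⁻¹) ^ mm| ≤ 1 := by
      rw [abs_of_nonneg (by positivity)]
      apply pow_le_one₀ (by positivity)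
      rw [inv_le_one_iff₀]
      right
      exact one_le_pow₀ hD1
    have h3 : |iteratedDeriv (mm + 1) φ ((θ + (k (n + 1) : ℝ)) / (d : ℝ) ^ (n + 2))| ≤
        B (mm + 1) := hB (mm + 1) _
    calc |b (n + 1) * ((((d : ℝ) ^ (n + 2))⁻¹) ^ mm *
          iteratedDeriv (mm + 1) φ ((θ + (k (n + 1) : ℝ)) / (d : ℝ) ^ (n + 2)))|
        = |b (n + 1)| * (|(((d : ℝ) ^ (n + 2))⁻¹) ^ mm| *
          |iteratedDeriv (mm + 1) φ ((θ + (k (n + 1) : ℝ)) / (d : ℝ) ^ (n + 2))|) := by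
          rw [abs_mul, abs_mul]
      _ ≤ (C₁ * (R₁ / (d : ℝ)) ^ (n + 1)) * (1 * B (mm + 1)) := by
          apply mul_le_mul h1 (mul_le_mul h2 h3 (abs_nonneg _) zero_le_one)
            (by positivity) (by positivity)
      _ = (C₁ * B (mm + 1)) * (R₁ / (d : ℝ)) ^ (n + 1) := by ring
  -- summability of the bounds
  have hsum_geo : Summable (fun n : ℕ => (R₁ / (d : ℝ)) ^ (n + 1)) := by
    simpa [pow_succ] using (summable_geometric_of_lt_one hr0.le hr1).mul_right (R₁ / (d : ℝ))
  have hsumv : ∀ K : ℝ, Summable (fun n : ℕ => K * (R₁ / (d : ℝ)) ^ (n + 1)) :=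
    fun K => hsum_geo.mul_left K
  -- differentiating the series term by term
  have hsum_deriv : ∀ mm : ℕ, iteratedDeriv mm (fun θ => ∑' n, g n θ) =
      fun θ => ∑' n, iteratedDeriv mm (g n) θ := by
    intro mm
    induction mm with
    | zero => simp [iteratedDeriv_zero]
    | succ mm ih =>
      rw [iteratedDeriv_succ, ih]
      have hdiff : ∀ n, Differentiable ℝ (iteratedDeriv mm (g n)) := fun n =>
        (hgc n).differentiable_iteratedDeriv mm (hlt mm)
      have hbound : ∀ (n : ℕ) (y : ℝ), ‖deriv (iteratedDeriv mm (g n)) y‖ ≤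
          (C₁ * B (mm + 2)) * (R₁ / (d : ℝ)) ^ (n + 1) := by
        intro n y
        rw [← iteratedDeriv_succ, Real.norm_eq_abs]
        exact hgb (mm + 1) n y
      have hsum0 : Summable fun n => iteratedDeriv mm (g n) 0 := by
        apply Summable.of_norm_bounded (hsumv (C₁ * B (mm + 1)))
        intro n
        rw [Real.norm_eq_abs]
        exact hgb mm n 0
      rw [deriv_tsum (hsumv (C₁ * B (mm + 2))) hdiff hbound hsum0]
      funext θ
      apply tsum_congr
      intro n
      rw [← iteratedDeriv_succ]
  -- smoothness of the series
  have hS : ContDiff ℝ ((m : ℕ∞)) (fun θ : ℝ => ∑' n, g n θ) := by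
    apply contDiff_tsum (v := fun mm n => (C₁ * B (mm + 1)) * (R₁ / (d : ℝ)) ^ (n + 1))
      (fun n => (hgc n).of_le le_top) (fun mm _ => hsumv _)
    intro mm n x _
    rw [norm_iteratedFDeriv_eq_norm_iteratedDeriv, Real.norm_eq_abs]
    exact hgb mm n x
  -- the first term
  set h₁ : ℝ → ℝ := fun θ => deriv φ ((θ + (k 1 : ℝ)) / (d : ℝ)) with hh₁def
  have hh₁c : ContDiff ℝ (⊤ : WithTop ℕ∞) h₁ :=
    hderiv_top.comp ((contDiff_id.add contDiff_const).div_const _)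
  have hh₁m : ∀ θ : ℝ, iteratedDeriv m h₁ θ =
      ((d : ℝ))⁻¹ ^ m * iteratedDeriv (m + 1) φ ((θ + (k 1 : ℝ)) / (d : ℝ)) := by
    intro θ
    have h := congrFun (aux_iteratedDeriv_comp_affine hderiv_top m ((k 1 : ℝ)) ((d : ℝ))) θ
    calc iteratedDeriv m h₁ θ
        = ((d : ℝ))⁻¹ ^ m * iteratedDeriv m (deriv φ) ((θ + (k 1 : ℝ)) / (d : ℝ)) := h
      _ = ((d : ℝ))⁻¹ ^ m * iteratedDeriv (m + 1) φ ((θ + (k 1 : ℝ)) / (d : ℝ)) := by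
          rw [← iteratedDeriv_succ']
  -- the evaluation point
  set θs : ℝ := (d : ℝ) * θ₀ - (k 1 : ℝ) with hθsdef
  have harg : (θs + (k 1 : ℝ)) / (d : ℝ) = θ₀ := by
    rw [hθsdef]
    field_simp
    ring
  -- T as a sum of two functions
  have hTeq : T = fun θ => h₁ θ + (fun θ : ℝ => ∑' n, g n θ) θ := by
    funext θ
    exact hT θ
  have hadd : iteratedDeriv m T θs =
      iteratedDeriv m h₁ θs + iteratedDeriv m (fun θ : ℝ => ∑' n, g n θ) θs := by
    rw [hTeq]
    rw [← iteratedDerivWithin_univ, ← iteratedDerivWithin_univ, ← iteratedDerivWithin_univ]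
    exact iteratedDerivWithin_add (Set.mem_univ _) uniqueDiffOn_univ
      (hh₁c.of_le le_top).contDiffWithinAt hS.contDiffWithinAt
  -- the main term
  have hmain : iteratedDeriv m h₁ θs = ((d : ℝ))⁻¹ ^ m * iteratedDeriv (m + 1) φ θ₀ := by
    rw [hh₁m θs, harg]
  -- bounding the error term
  have hterm : ∀ n : ℕ, (d : ℝ) ^ m * |iteratedDeriv m (g n) θs| ≤ (C₁ * M) * q ^ (n + 1) := by
    intro n
    have hid : (d : ℝ) ^ m * ((((d : ℝ) ^ (n + 2))⁻¹) ^ m * (R₁ / (d : ℝ)) ^ (n + 1)) =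
        q ^ (n + 1) := by
      rw [hqdef, div_pow, div_pow, inv_pow, ← pow_mul, ← pow_mul]
      field_simp
      ring
    have h1 : |iteratedDeriv m (g n) θs| ≤
        (C₁ * (R₁ / (d : ℝ)) ^ (n + 1)) * ((((d : ℝ) ^ (n + 2))⁻¹) ^ m * M) := by
      rw [hgder m n θs]
      rw [abs_mul, abs_mul]
      apply mul_le_mul (hb (n + 1) (by omega))
      · apply mul_le_mul (le_of_eq (abs_of_nonneg (by positivity))) (hφl_le _)
          (abs_nonneg _) (by positivity)
      · positivity
      · positivity
    calc (d : ℝ) ^ m * |iteratedDeriv m (g n) θs|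
        ≤ (d : ℝ) ^ m * ((C₁ * (R₁ / (d : ℝ)) ^ (n + 1)) *
            ((((d : ℝ) ^ (n + 2))⁻¹) ^ m * M)) := by
          apply mul_le_mul_of_nonneg_left h1 (by positivity)
      _ = (C₁ * M) * ((d : ℝ) ^ m * ((((d : ℝ) ^ (n + 2))⁻¹) ^ m *
            (R₁ / (d : ℝ)) ^ (n + 1))) := by ring
      _ = (C₁ * M) * q ^ (n + 1) := by rw [hid]
  have hsumq : Summable (fun n : ℕ => (C₁ * M) * q ^ (n + 1)) := by
    apply Summable.mul_left
    simpa [pow_succ] using (summable_geometric_of_lt_one hq0.le hq1).mul_right q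
  have hsumg_abs : Summable (fun n => |iteratedDeriv m (g n) θs|) :=
    Summable.of_nonneg_of_le (fun n => abs_nonneg _) (fun n => hgb m n θs)
      (hsumv (C₁ * B (m + 1)))
  have hE : (d : ℝ) ^ m * |∑' n, iteratedDeriv m (g n) θs| ≤ M / 2 := by
    have h1 : |∑' n, iteratedDeriv m (g n) θs| ≤ ∑' n, |iteratedDeriv m (g n) θs| := by
      simpa [Real.norm_eq_abs] using norm_tsum_le_tsum_norm
        (f := fun n => iteratedDeriv m (g n) θs)
        (by simpa [Real.norm_eq_abs] using hsumg_abs)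
    have h2 : (d : ℝ) ^ m * |∑' n, iteratedDeriv m (g n) θs| ≤
        ∑' n, (d : ℝ) ^ m * |iteratedDeriv m (g n) θs| := by
      rw [tsum_mul_left]
      apply mul_le_mul_of_nonneg_left h1 (by positivity)
    have h3 : ∑' n, (d : ℝ) ^ m * |iteratedDeriv m (g n) θs| ≤
        ∑' n, (C₁ * M) * q ^ (n + 1) :=
      Summable.tsum_le_tsum hterm (hsumg_abs.mul_left ((d : ℝ) ^ m)) hsumq
    have h4 : ∑' n : ℕ, (C₁ * M) * q ^ (n + 1) = (C₁ * M * q) * (1 - q)⁻¹ := by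
      have he : ∀ n : ℕ, (C₁ * M) * q ^ (n + 1) = (C₁ * M * q) * q ^ n := by
        intro n; rw [pow_succ]; ring
      rw [tsum_congr he, tsum_mul_left, tsum_geometric_of_lt_one hq0.le hq1]
    have h5 : (C₁ * M * q) * (1 - q)⁻¹ ≤ M / 2 := by
      calc (C₁ * M * q) * (1 - q)⁻¹ = M * (C₁ * q / (1 - q)) := by ring
        _ ≤ M * (1 / 2) := mul_le_mul_of_nonneg_left hlbig hM0
        _ = M / 2 := by ring
    linarith
  -- putting everything together
  have hA : (d : ℝ) ^ m * |((d : ℝ))⁻¹ ^ m * iteratedDeriv (m + 1) φ θ₀| = M := by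
    rw [abs_mul, abs_of_nonneg (by positivity : (0:ℝ) ≤ ((d : ℝ))⁻¹ ^ m), hθ₀max,
      ← mul_assoc, ← mul_pow, mul_inv_cancel₀ (ne_of_gt hD0), one_pow, one_mul]
  have hgoal : M / 2 ≤ (d : ℝ) ^ m * |iteratedDeriv m T θs| := by
    rw [hadd, hmain, hsum_deriv m]
    set A := ((d : ℝ))⁻¹ ^ m * iteratedDeriv (m + 1) φ θ₀ with hAdef
    set E := ∑' n, iteratedDeriv m (g n) θs with hEdef
    have htri : |A| - |E| ≤ |A + E| := by
      have h := abs_add_le (A + E) (-E)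
      simp only [add_neg_cancel_right, abs_neg] at h
      linarith
    have h6 : (d : ℝ) ^ m * (|A| - |E|) ≤ (d : ℝ) ^ m * |A + E| :=
      mul_le_mul_of_nonneg_left htri (by positivity)
    rw [mul_sub] at h6
    have hA' : (d : ℝ) ^ m * |A| = M := hA
    have hE' : (d : ℝ) ^ m * |E| ≤ M / 2 := hE
    linarith
  have hfin : m + 1 - 1 = m := by omega
  rw [hfin]
  exact hgoal
end
end

section
/- Let N₀ be a positive integer such that φ is not of period d^{−N₀}, and let m₀ be the minimal positive integer such that d^{N₀} does not divide m₀ and c_{m₀} ≠ 0 (where c_n are the Fourier coefficients of φ). Then for every integer N₁ ≥ N₀, the function Q_{N₁}(θ) = ∑_{k=1}^{N₁} (f^{N₁−k})'(f^k(0))·φ(d^{k−1}θ) satisfies ∫₀¹ Q_{N₁}(θ)·e^{−2πi m₀ θ} dθ = (f^{N₁−1})'(f(0))·c_{m₀} ≠ 0; in particular, Q_{N₁} is not of period d^{−N₀}. -/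
open Set MeasureTheory Filter
open scoped ENNReal

noncomputable section

namespace QNP

def E (m : ℕ) (θ : ℝ) : ℂ := Complex.exp (-2 * Real.pi * Complex.I * m * θ)

lemma E_add (m : ℕ) (θ s : ℝ) : E m (θ + s) = E m θ * E m s := by
  unfold E; rw [← Complex.exp_add]; push_cast; ring_nf

lemma E_one (m : ℕ) : E m 1 = 1 := by
  unfold E
  have h : (-2 * (Real.pi : ℂ) * Complex.I * m * ((1 : ℝ) : ℂ)) =
      ((-(m : ℤ) : ℤ) : ℂ) * (2 * Real.pi * Complex.I) := by push_cast; ring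
  rw [h]; exact Complex.exp_int_mul_two_pi_mul_I _

lemma E_cont (m : ℕ) : Continuous (E m) := by
  unfold E
  exact Complex.continuous_exp.comp (by continuity)

lemma E_div_ne_one {m D : ℕ} (hD : 0 < D) (h : ¬ D ∣ m) : E m (1 / (D : ℝ)) ≠ 1 := by
  unfold E
  intro hone
  rw [Complex.exp_eq_one_iff] at hone
  obtain ⟨n, hn⟩ := hone
  apply h
  have h2 : (2 * (Real.pi : ℂ) * Complex.I) ≠ 0 := by
    simp [Real.pi_ne_zero, Complex.I_ne_zero]
  have hDC : (D : ℂ) ≠ 0 := Nat.cast_ne_zero.mpr hD.ne'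
  have hn' : ((-(m : ℂ)) / D) * (2 * Real.pi * Complex.I) =
      (n : ℂ) * (2 * Real.pi * Complex.I) := by
    rw [← hn]; push_cast; ring
  have h3 : (-(m : ℂ)) / D = n := mul_right_cancel₀ h2 hn'
  have h4 : (m : ℂ) = ((D : ℤ) * (-n) : ℤ) := by
    push_cast
    field_simp at h3
    linear_combination -h3
  have h5 : (m : ℤ) = (D : ℤ) * (-n) := by exact_mod_cast h4
  have : (D : ℤ) ∣ (m : ℤ) := ⟨-n, h5⟩
  exact_mod_cast this

lemma integral_eq_zero_of_mul_shift {g : ℝ → ℂ} (hg1 : Function.Periodic g 1)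
    {s : ℝ} {ω : ℂ} (hω : ω ≠ 1) (hshift : ∀ θ, g (θ + s) = ω * g θ) :
    ∫ θ in (0:ℝ)..1, g θ = 0 := by
  have h1 : (∫ θ in (0:ℝ)..1, g (θ + s)) = ∫ θ in (0:ℝ)..1, g θ := by
    rw [intervalIntegral.integral_comp_add_right, zero_add, add_comm 1 s]
    simpa using hg1.intervalIntegral_add_eq s 0
  have h2 : (∫ θ in (0:ℝ)..1, g (θ + s)) = ω * ∫ θ in (0:ℝ)..1, g θ := by
    simp_rw [hshift]
    exact intervalIntegral.integral_const_mul ω g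
  have h3 : (ω - 1) * ∫ θ in (0:ℝ)..1, g θ = 0 := by
    rw [sub_mul, one_mul, ← h2, h1, sub_self]
  rcases mul_eq_zero.1 h3 with h | h
  · exact absurd (sub_eq_zero.1 h) hω
  · exact h

lemma integral_comp_nat_mul {h : ℝ → ℂ} (hc : Continuous h) (hp : Function.Periodic h 1)
    {D : ℕ} (hD : 0 < D) :
    (∫ θ in (0:ℝ)..1, h ((D : ℝ) * θ)) = ∫ θ in (0:ℝ)..1, h θ := by
  have hD0 : (D : ℝ) ≠ 0 := Nat.cast_ne_zero.mpr hD.ne'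
  rw [intervalIntegral.integral_comp_mul_left h hD0]
  have hint : ∀ t₁ t₂, IntervalIntegrable h MeasureSpace.volume t₁ t₂ :=
    fun t₁ t₂ => hc.intervalIntegrable t₁ t₂
  have hz := hp.intervalIntegral_add_zsmul_eq (D : ℤ) 0 hint
  simp only [zero_add, zsmul_eq_mul, Int.cast_natCast, smul_eq_mul, mul_one] at hz
  rw [mul_zero, mul_one, hz, Complex.real_smul]
  push_cast
  rw [← mul_assoc, inv_mul_cancel₀ (by exact_mod_cast hD0), one_mul]

lemma qm_differentiable (a : ℝ) : Differentiable ℝ (qm a) := by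
  unfold qm
  exact (differentiable_const a).sub (differentiable_pow 2)

lemma deriv_qm (a x : ℝ) : deriv (qm a) x = -2 * x := by
  unfold qm
  rw [deriv_const_sub, deriv_pow_field]
  ring

lemma iter_differentiable (a : ℝ) (n : ℕ) : Differentiable ℝ ((qm a)^[n]) := by
  induction n with
  | zero => simpa using differentiable_id
  | succ n ih =>
    rw [Function.iterate_succ']
    exact (qm_differentiable a).comp ih

lemma deriv_iter (a : ℝ) (n : ℕ) (x : ℝ) :
    deriv ((qm a)^[n]) x = ∏ i ∈ Finset.range n, (-2 * (qm a)^[i] x) := by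
  induction n with
  | zero => simp
  | succ n ih =>
    rw [Function.iterate_succ',
      deriv_comp x ((qm_differentiable a).differentiableAt)
        ((iter_differentiable a n).differentiableAt),
      deriv_qm, ih, Finset.prod_range_succ]
    ring

lemma phi_add_nat {φ : ℝ → ℝ} (hφp : Function.Periodic φ 1) (x : ℝ) (n : ℕ) :
    φ (x + n) = φ x := by
  simpa using (hφp.nat_mul n) x

end QNP

/-- Let `N₀ ≥ 1` be such that `φ` is not of period `d^{-N₀}`, and let `m₀` be
the minimal positive integer such that `d^{N₀} ∤ m₀` and the Fourier coefficient
`c_{m₀} = ∫₀¹ φ(θ) e^{-2πi m₀ θ} dθ` is nonzero. Then for every `N₁ ≥ N₀`, the function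
`Q_{N₁}(θ) = ∑_{k=1}^{N₁} (f^{N₁-k})'(f^k(0)) φ(d^{k-1}θ)` satisfies
`∫₀¹ Q_{N₁}(θ) e^{-2πi m₀ θ} dθ = (f^{N₁-1})'(f(0)) · c_{m₀} ≠ 0`; in particular `Q_{N₁}` is
not of period `d^{-N₀}`. -/
theorem Q_not_periodic
    (a : ℝ) (ha : a ∈ Set.Ioo (1 : ℝ) 2) (hpre : StrictlyPreperiodic a)
    (d : ℕ) (hd : 2 ≤ d)
    (φ : ℝ → ℝ) (hφa : ∀ x : ℝ, AnalyticAt ℝ φ x) (hφp : Function.Periodic φ 1)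
    (hφnc : ∃ s t : ℝ, φ s ≠ φ t) (hφb : ∀ θ : ℝ, |φ θ| ≤ 1)
    (N₀ : ℕ) (hN₀ : 1 ≤ N₀)
    (hφnp : ¬ Function.Periodic φ (1 / (d : ℝ) ^ N₀))
    (c : ℕ → ℂ)
    (hc : ∀ m : ℕ, c m =
      ∫ θ in (0 : ℝ)..1, (φ θ : ℂ) * Complex.exp (-2 * Real.pi * Complex.I * m * θ))
    (m₀ : ℕ) (hm₀pos : 0 < m₀) (hm₀div : ¬ d ^ N₀ ∣ m₀) (hm₀c : c m₀ ≠ 0)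
    (hm₀min : ∀ m : ℕ, 0 < m → ¬ d ^ N₀ ∣ m → c m ≠ 0 → m₀ ≤ m) :
    ∀ N₁ : ℕ, N₀ ≤ N₁ →
      (∫ θ in (0 : ℝ)..1,
          ((∑ k ∈ Finset.Icc 1 N₁,
              deriv ((qm a)^[N₁ - k]) ((qm a)^[k] 0) * φ ((d : ℝ) ^ (k - 1) * θ) : ℝ) : ℂ) *
            Complex.exp (-2 * Real.pi * Complex.I * m₀ * θ)) =
        (Complex.ofReal (deriv ((qm a)^[N₁ - 1]) (qm a 0))) * c m₀ ∧
      (Complex.ofReal (deriv ((qm a)^[N₁ - 1]) (qm a 0))) * c m₀ ≠ 0 ∧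
      ¬ Function.Periodic
          (fun θ : ℝ => ∑ k ∈ Finset.Icc 1 N₁,
            deriv ((qm a)^[N₁ - k]) ((qm a)^[k] 0) * φ ((d : ℝ) ^ (k - 1) * θ))
          (1 / (d : ℝ) ^ N₀) := by
  have hφc : Continuous φ := continuous_iff_continuousAt.2 fun x => (hφa x).continuousAt
  intro N₁ hN₁
  have hN₁1 : 1 ≤ N₁ := hN₀.trans hN₁
  -- the basic integrals
  have hbase : ∀ k : ℕ, 1 ≤ k →
      (∫ θ in (0:ℝ)..1, ((φ ((d : ℝ) ^ (k - 1) * θ) : ℝ) : ℂ) * QNP.E m₀ θ) =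
        if k = 1 then c m₀ else 0 := by
    intro k hk
    rcases eq_or_lt_of_le hk with h1 | h2
    · subst h1
      rw [if_pos rfl, hc m₀]
      norm_num [QNP.E]
    · rw [if_neg (by omega)]
      set D : ℕ := d ^ (k - 1) with hDdef
      have hDcast : ((d : ℝ)) ^ (k - 1) = (D : ℝ) := by rw [hDdef]; push_cast; ring
      have hD2 : 2 ≤ D := le_trans hd (Nat.le_self_pow (by omega) d)
      have hDpos : 0 < D := by omega
      rw [hDcast]
      by_cases hdvd : D ∣ m₀
      · obtain ⟨m, hm⟩ := hdvd
        have hmpos : 0 < m := by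
          rcases Nat.eq_zero_or_pos m with h0 | h
          · subst h0; simp at hm; omega
          · exact h
        have hper' : Function.Periodic (fun u => ((φ u : ℝ) : ℂ) * QNP.E m u) 1 := by
          intro x
          try simp only []
          rw [hφp x, QNP.E_add, QNP.E_one, mul_one]
        have hcont : Continuous (fun u => ((φ u : ℝ) : ℂ) * QNP.E m u) :=
          (Complex.continuous_ofReal.comp hφc).mul (QNP.E_cont m)
        have hEeq : ∀ θ : ℝ, QNP.E m₀ θ = QNP.E m ((D : ℝ) * θ) := by
          intro θ; unfold QNP.E; congr 1; rw [hm]; push_cast; ring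
        have hcm : c m = 0 := by
          by_contra hne
          have hnd : ¬ d ^ N₀ ∣ m := by
            intro hdm
            exact hm₀div (hm ▸ Dvd.dvd.mul_left hdm D)
          have hmin := hm₀min m hmpos hnd hne
          have h2m : 2 * m ≤ D * m := Nat.mul_le_mul_right m hD2
          omega
        calc (∫ θ in (0:ℝ)..1, ((φ ((D : ℝ) * θ) : ℝ) : ℂ) * QNP.E m₀ θ)
            = ∫ θ in (0:ℝ)..1, ((φ θ : ℝ) : ℂ) * QNP.E m θ := by
              simp_rw [hEeq]
              exact QNP.integral_comp_nat_mul hcont hper' hDpos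
          _ = c m := (hc m).symm
          _ = 0 := hcm
      · refine QNP.integral_eq_zero_of_mul_shift (s := 1 / (D : ℝ))
          (ω := QNP.E m₀ (1 / (D : ℝ))) ?_ (QNP.E_div_ne_one hDpos hdvd) ?_
        · intro x
          try simp only []
          have h1 : (D : ℝ) * (x + 1) = (D : ℝ) * x + (D : ℕ) := by push_cast; ring
          rw [h1, QNP.phi_add_nat hφp, QNP.E_add, QNP.E_one, mul_one]
        · intro θ
          try simp only []
          have h1 : (D : ℝ) * (θ + 1 / (D : ℝ)) = (D : ℝ) * θ + 1 := by
            have : (D : ℝ) ≠ 0 := Nat.cast_ne_zero.mpr hDpos.ne'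
            field_simp
          rw [h1, hφp ((D : ℝ) * θ), QNP.E_add]
          ring
  -- the main integral identity
  have hmain : (∫ θ in (0:ℝ)..1,
      ((∑ k ∈ Finset.Icc 1 N₁,
          deriv ((qm a)^[N₁ - k]) ((qm a)^[k] 0) * φ ((d : ℝ) ^ (k - 1) * θ) : ℝ) : ℂ) *
        QNP.E m₀ θ)
      = (Complex.ofReal (deriv ((qm a)^[N₁ - 1]) (qm a 0))) * c m₀ := by
    have hrw : ∀ θ : ℝ,
        ((∑ k ∈ Finset.Icc 1 N₁,
            deriv ((qm a)^[N₁ - k]) ((qm a)^[k] 0) * φ ((d : ℝ) ^ (k - 1) * θ) : ℝ) : ℂ) *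
          QNP.E m₀ θ
        = ∑ k ∈ Finset.Icc 1 N₁,
            ((deriv ((qm a)^[N₁ - k]) ((qm a)^[k] 0) : ℝ) : ℂ) *
              (((φ ((d : ℝ) ^ (k - 1) * θ) : ℝ) : ℂ) * QNP.E m₀ θ) := by
      intro θ
      push_cast
      rw [Finset.sum_mul]
      exact Finset.sum_congr rfl fun k _ => by ring
    simp_rw [hrw]
    rw [intervalIntegral.integral_finset_sum]
    · have hterm : ∀ k ∈ Finset.Icc 1 N₁,
          (∫ θ in (0:ℝ)..1,
            ((deriv ((qm a)^[N₁ - k]) ((qm a)^[k] 0) : ℝ) : ℂ) *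
              (((φ ((d : ℝ) ^ (k - 1) * θ) : ℝ) : ℂ) * QNP.E m₀ θ))
          = ((deriv ((qm a)^[N₁ - k]) ((qm a)^[k] 0) : ℝ) : ℂ) * (if k = 1 then c m₀ else 0) := by
        intro k hk
        rw [intervalIntegral.integral_const_mul, hbase k (Finset.mem_Icc.mp hk).1]
      rw [Finset.sum_congr rfl hterm,
        Finset.sum_eq_single_of_mem 1 (Finset.mem_Icc.mpr ⟨le_refl 1, hN₁1⟩)]
      · simp [Function.iterate_one]
      · intro b _ hbne
        rw [if_neg hbne, mul_zero]
    · intro k _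
      apply Continuous.intervalIntegrable
      exact continuous_const.mul
        ((Complex.continuous_ofReal.comp (hφc.comp (continuous_const.mul continuous_id))).mul
          (QNP.E_cont m₀))
  -- nonvanishing
  have hA1ne : deriv ((qm a)^[N₁ - 1]) (qm a 0) ≠ 0 := by
    rw [QNP.deriv_iter]
    refine Finset.prod_ne_zero_iff.mpr fun i _ => ?_
    have h2 : (qm a)^[i] (qm a 0) = (qm a)^[i + 1] 0 :=
      (Function.iterate_succ_apply (qm a) i 0).symm
    rw [h2]
    exact mul_ne_zero (by norm_num) (hpre.1 (i + 1) (by omega))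
  have hne : (Complex.ofReal (deriv ((qm a)^[N₁ - 1]) (qm a 0))) * c m₀ ≠ 0 :=
    mul_ne_zero (Complex.ofReal_ne_zero.2 hA1ne) hm₀c
  refine ⟨hmain, hne, ?_⟩
  -- non-periodicity
  intro hper
  have hD₀pos : 0 < d ^ N₀ := Nat.pow_pos (by omega)
  have hcast : 1 / ((d : ℝ)) ^ N₀ = 1 / ((d ^ N₀ : ℕ) : ℝ) := by push_cast; ring
  have hQs : ∀ θ : ℝ,
      (∑ k ∈ Finset.Icc 1 N₁,
        deriv ((qm a)^[N₁ - k]) ((qm a)^[k] 0) *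
          φ ((d : ℝ) ^ (k - 1) * (θ + 1 / ((d ^ N₀ : ℕ) : ℝ))))
      = ∑ k ∈ Finset.Icc 1 N₁,
          deriv ((qm a)^[N₁ - k]) ((qm a)^[k] 0) * φ ((d : ℝ) ^ (k - 1) * θ) := by
    intro θ
    have h := hper θ
    try simp only [] at h
    rwa [hcast] at h
  have hQ1 : ∀ θ : ℝ,
      (∑ k ∈ Finset.Icc 1 N₁,
        deriv ((qm a)^[N₁ - k]) ((qm a)^[k] 0) * φ ((d : ℝ) ^ (k - 1) * (θ + 1)))
      = ∑ k ∈ Finset.Icc 1 N₁,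
          deriv ((qm a)^[N₁ - k]) ((qm a)^[k] 0) * φ ((d : ℝ) ^ (k - 1) * θ) := by
    intro θ
    refine Finset.sum_congr rfl fun k _ => ?_
    congr 1
    have h1 : (d : ℝ) ^ (k - 1) * (θ + 1) = (d : ℝ) ^ (k - 1) * θ + ((d ^ (k - 1) : ℕ) : ℝ) := by
      push_cast; ring
    rw [h1, QNP.phi_add_nat hφp]
  have hzero : (∫ θ in (0:ℝ)..1,
      ((∑ k ∈ Finset.Icc 1 N₁,
          deriv ((qm a)^[N₁ - k]) ((qm a)^[k] 0) * φ ((d : ℝ) ^ (k - 1) * θ) : ℝ) : ℂ) *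
        QNP.E m₀ θ) = 0 := by
    refine QNP.integral_eq_zero_of_mul_shift (s := 1 / ((d ^ N₀ : ℕ) : ℝ))
      (ω := QNP.E m₀ (1 / ((d ^ N₀ : ℕ) : ℝ))) ?_ (QNP.E_div_ne_one hD₀pos hm₀div) ?_
    · intro x
      try simp only []
      rw [hQ1 x, QNP.E_add, QNP.E_one, mul_one]
    · intro θ
      try simp only []
      rw [hQs θ, QNP.E_add]
      ring
  rw [hmain] at hzero
  exact hne hzero
end
end
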